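/- The Duhamel (canonical) correlation of the reduced symmetry generator equals ∫₀^β Tr(ρ_λ · σ̂^z · exp(−u·h_λ) · σ̂^z · exp(u·h_λ)) du = (|λ|²/μ³)·tanh(βμ). In particular, if λ ≠ 0 satisfies the gap equation tanh(βμ) = 2μ, this quantization parameter equals 2|λ|²/μ². -/

import Mathlib

open Matrix

/-- Matrix exponential on 2×2 complex matrices. -/
noncomputable def mexp (A : Matrix (Fin 2) (Fin 2) ℂ) : Matrix (Fin 2) (Fin 2) ℂ :=
  NormedSpace.exp A

/-- Pauli matrix σ^z. -/
def σz : Matrix (Fin 2) (Fin 2) ℂ := !![1, 0; 0, -1]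
/-- Pauli matrix σ^+. -/
def σp : Matrix (Fin 2) (Fin 2) ℂ := !![0, 1; 0, 0]
/-- Pauli matrix σ^-. -/
def σm : Matrix (Fin 2) (Fin 2) ℂ := !![0, 0; 1, 0]

/-- μ = √(ε² + |λ|²). -/
noncomputable def μBCS (ε : ℝ) (l : ℂ) : ℝ := Real.sqrt (ε ^ 2 + ‖l‖ ^ 2)

/-- One-site effective Hamiltonian h_λ = ε·σ^z − λ·σ^+ − (conj λ)·σ^-. -/
noncomputable def hBCS (ε : ℝ) (l : ℂ) : Matrix (Fin 2) (Fin 2) ℂ :=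
  (ε : ℂ) • σz - l • σp - (starRingEnd ℂ l) • σm

/-- One-site Gibbs density matrix ρ_λ = exp(−β h_λ)/Tr exp(−β h_λ). -/
noncomputable def ρBCS (ε β : ℝ) (l : ℂ) : Matrix (Fin 2) (Fin 2) ℂ :=
  (Matrix.trace (mexp (-(β : ℂ) • hBCS ε l)))⁻¹ • mexp (-(β : ℂ) • hBCS ε l)

/-- Spectral projection P₊ = (1/2)(1 + h_λ/μ). -/
noncomputable def Pplus (ε : ℝ) (l : ℂ) : Matrix (Fin 2) (Fin 2) ℂ :=
  (1 / 2 : ℂ) • (1 + (μBCS ε l : ℂ)⁻¹ • hBCS ε l)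

/-- Spectral projection P₋ = (1/2)(1 − h_λ/μ). -/
noncomputable def Pminus (ε : ℝ) (l : ℂ) : Matrix (Fin 2) (Fin 2) ℂ :=
  (1 / 2 : ℂ) • (1 - (μBCS ε l : ℂ)⁻¹ • hBCS ε l)

/-- E₋(A) = P₋·A·P₊. -/
noncomputable def Eminus (ε : ℝ) (l : ℂ) (A : Matrix (Fin 2) (Fin 2) ℂ) :
    Matrix (Fin 2) (Fin 2) ℂ := Pminus ε l * A * Pplus ε l

/-- E₀(A) = P₋·A·P₋ + P₊·A·P₊. -/
noncomputable def Ezero (ε : ℝ) (l : ℂ) (A : Matrix (Fin 2) (Fin 2) ℂ) :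
    Matrix (Fin 2) (Fin 2) ℂ := Pminus ε l * A * Pminus ε l + Pplus ε l * A * Pplus ε l

/-- E₊(A) = P₊·A·P₋. -/
noncomputable def Eplus (ε : ℝ) (l : ℂ) (A : Matrix (Fin 2) (Fin 2) ℂ) :
    Matrix (Fin 2) (Fin 2) ℂ := Pplus ε l * A * Pminus ε l

/-- The complex structure map J(A) = i·(E₊(A) − E₋(A)). -/
noncomputable def Jmap (ε : ℝ) (l : ℂ) (A : Matrix (Fin 2) (Fin 2) ℂ) :
    Matrix (Fin 2) (Fin 2) ℂ := Complex.I • (Eplus ε l A - Eminus ε l A)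

/-- Reduced symmetry generator σ̂^z = (E₊ + E₋)(σ^z). -/
noncomputable def σhat (ε : ℝ) (l : ℂ) : Matrix (Fin 2) (Fin 2) ℂ :=
  Eplus ε l σz + Eminus ε l σz

/-- Canonical order parameter Jσ̂^z = i·(E₊ − E₋)(σ^z). -/
noncomputable def Jσhat (ε : ℝ) (l : ℂ) : Matrix (Fin 2) (Fin 2) ℂ :=
  Jmap ε l σz

/-! ### Auxiliary lemmas -/

lemma exp_smul_idem {P : Matrix (Fin 2) (Fin 2) ℂ} (hP : P * P = P) (c : ℂ) :
    NormedSpace.exp (c • P) = (1 - P) + Complex.exp c • P := by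
  have hPpow : ∀ k : ℕ, P ^ (k + 1) = P := by
    intro k; induction k with
    | zero => simp
    | succ k ih => rw [pow_succ, ih, hP]
  have key : ∀ n : ℕ, ((n.factorial : ℂ))⁻¹ • (c • P) ^ n
      = ((n.factorial : ℂ)⁻¹ * c ^ n) • P
        + (if n = 0 then (1 : Matrix (Fin 2) (Fin 2) ℂ) - P else 0) := by
    intro n
    cases n with
    | zero => simp
    | succ k =>
      rw [smul_pow, hPpow, smul_smul]
      simp
  simp only [NormedSpace.exp_eq_tsum ℂ]
  rw [tsum_congr key]
  have h1 : Summable fun n : ℕ => ((n.factorial : ℂ)⁻¹ * c ^ n) • P := by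
    have := NormedSpace.expSeries_div_summable c
    have h' : Summable fun n : ℕ => (n.factorial : ℂ)⁻¹ * c ^ n := by
      simpa [div_eq_mul_inv, mul_comm] using this
    exact h'.smul_const P
  have h2 : Summable fun n : ℕ =>
      (if n = 0 then (1 : Matrix (Fin 2) (Fin 2) ℂ) - P else 0) := by
    apply summable_of_ne_finset_zero (s := {0})
    intro n hn; simp at hn; simp [hn]
  rw [Summable.tsum_add h1 h2]
  have e1 : (∑' n : ℕ, ((n.factorial : ℂ)⁻¹ * c ^ n) • P) = Complex.exp c • P := by
    rw [Summable.tsum_smul_const]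
    · congr 1
      rw [Complex.exp_eq_exp_ℂ, NormedSpace.exp_eq_tsum ℂ]
      simp [smul_eq_mul]
    · have := NormedSpace.expSeries_div_summable c
      simpa [div_eq_mul_inv, mul_comm] using this
  have e2 : (∑' n : ℕ, (if n = 0 then (1 : Matrix (Fin 2) (Fin 2) ℂ) - P else 0)) = 1 - P :=
    tsum_ite_eq 0 _
  rw [e1, e2]; abel

section Aux
variable (ε : ℝ) (l : ℂ)

lemma hBCS_eq : hBCS ε l = !![(ε : ℂ), -l; -(starRingEnd ℂ l), -(ε : ℂ)] := by
  ext i j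
  fin_cases i <;> fin_cases j <;> simp [hBCS, σz, σp, σm]

lemma mu_sq (hε : 0 < ε) : ((μBCS ε l : ℂ)) ^ 2 = (ε : ℂ) ^ 2 + l * (starRingEnd ℂ l) := by
  have h0 : (0:ℝ) ≤ ε ^ 2 + ‖l‖ ^ 2 := by positivity
  have h : (μBCS ε l) ^ 2 = ε ^ 2 + ‖l‖ ^ 2 := Real.sq_sqrt h0
  calc ((μBCS ε l : ℝ) : ℂ) ^ 2 = ((μBCS ε l ^ 2 : ℝ) : ℂ) := by push_cast; ring
    _ = ((ε ^ 2 + ‖l‖ ^ 2 : ℝ) : ℂ) := by rw [h]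
    _ = (ε : ℂ) ^ 2 + l * (starRingEnd ℂ l) := by
        rw [Complex.mul_conj, ← Complex.sq_norm]; push_cast; ring

lemma mu_pos (hε : 0 < ε) : 0 < μBCS ε l := by
  apply Real.sqrt_pos.2; positivity

lemma hBCS_sq (hε : 0 < ε) : hBCS ε l * hBCS ε l = ((μBCS ε l : ℂ) ^ 2) • 1 := by
  rw [mu_sq ε l hε, hBCS_eq]
  ext i j
  fin_cases i <;> fin_cases j <;>
    simp [Matrix.mul_apply, Fin.sum_univ_two, Matrix.one_apply] <;> ring

lemma Pplus_idem (hε : 0 < ε) : Pplus ε l * Pplus ε l = Pplus ε l := by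
  have hm : ((μBCS ε l : ℂ)) ≠ 0 := by
    exact_mod_cast (mu_pos ε l hε).ne'
  rw [Pplus, smul_mul_smul_comm, add_mul, mul_add, mul_add, one_mul, mul_one,
    smul_mul_smul_comm, hBCS_sq ε l hε, smul_smul]
  have hmm : ((μBCS ε l : ℂ))⁻¹ * ((μBCS ε l : ℂ))⁻¹ * ((μBCS ε l : ℂ)) ^ 2 = 1 := by
    field_simp
  rw [hmm]
  simp only [one_mul, smul_smul]
  module

lemma Pplus_add_Pminus : Pplus ε l + Pminus ε l = 1 := by
  rw [Pplus, Pminus]; module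

lemma Pminus_eq_one_sub : Pminus ε l = 1 - Pplus ε l :=
  eq_sub_of_add_eq' (Pplus_add_Pminus ε l)

lemma Pminus_idem (hε : 0 < ε) : Pminus ε l * Pminus ε l = Pminus ε l := by
  rw [Pminus_eq_one_sub, sub_mul, mul_sub, mul_sub, one_mul, one_mul, mul_one,
    Pplus_idem ε l hε]
  abel

lemma PQ0 (hε : 0 < ε) : Pplus ε l * Pminus ε l = 0 := by
  rw [Pminus_eq_one_sub, mul_sub, mul_one, Pplus_idem ε l hε, sub_self]

lemma QP0 (hε : 0 < ε) : Pminus ε l * Pplus ε l = 0 := by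
  rw [Pminus_eq_one_sub, sub_mul, one_mul, Pplus_idem ε l hε, sub_self]

lemma hBCS_eq_proj (hε : 0 < ε) :
    hBCS ε l = (2 * (μBCS ε l : ℂ)) • Pplus ε l - (μBCS ε l : ℂ) • 1 := by
  have hm : ((μBCS ε l : ℂ)) ≠ 0 := by exact_mod_cast (mu_pos ε l hε).ne'
  rw [Pplus, smul_smul]
  rw [smul_add, smul_smul]
  field_simp
  rw [one_smul]; abel

lemma mexp_smul_hBCS (hε : 0 < ε) (c : ℂ) :
    mexp (c • hBCS ε l) = Complex.exp (c * (μBCS ε l : ℂ)) • Pplus ε l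
      + Complex.exp (-(c * (μBCS ε l : ℂ))) • Pminus ε l := by
  have hm : ((μBCS ε l : ℂ)) ≠ 0 := by exact_mod_cast (mu_pos ε l hε).ne'
  set m : ℂ := (μBCS ε l : ℂ)
  have hsplit : c • hBCS ε l
      = (2 * c * m) • Pplus ε l + (-(c * m)) • (1 : Matrix (Fin 2) (Fin 2) ℂ) := by
    rw [hBCS_eq_proj ε l hε]
    module
  have hcomm : Commute ((2 * c * m) • Pplus ε l)
      ((-(c * m)) • (1 : Matrix (Fin 2) (Fin 2) ℂ)) := by
    exact (Commute.one_right _).smul_left _ |>.smul_right _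
  have hE := Matrix.exp_add_of_commute _ _ hcomm
  rw [mexp, hsplit, hE,
    exp_smul_idem (Pplus_idem ε l hε), exp_smul_idem (one_mul (1 : Matrix (Fin 2) (Fin 2) ℂ))]
  have h1P : (1 : Matrix (Fin 2) (Fin 2) ℂ) - Pplus ε l = Pminus ε l := by
    rw [← Pplus_add_Pminus ε l]; abel
  rw [h1P]
  have hx : Complex.exp (-(c * m)) * Complex.exp (2 * c * m) = Complex.exp (c * m) := by
    rw [← Complex.exp_add]; ring_nf
  rw [sub_self, zero_add, mul_smul_comm, mul_one, smul_add, smul_smul, hx, add_comm]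

lemma QQ' (hε : 0 < ε) : ∀ x, Pplus ε l * (Pplus ε l * x) = Pplus ε l * x := fun x => by
  rw [← mul_assoc, Pplus_idem ε l hε]
lemma RR' (hε : 0 < ε) : ∀ x, Pminus ε l * (Pminus ε l * x) = Pminus ε l * x := fun x => by
  rw [← mul_assoc, Pminus_idem ε l hε]
lemma QR' (hε : 0 < ε) : ∀ x, Pplus ε l * (Pminus ε l * x) = 0 := fun x => by
  rw [← mul_assoc, PQ0 ε l hε, zero_mul]
lemma RQ' (hε : 0 < ε) : ∀ x, Pminus ε l * (Pplus ε l * x) = 0 := fun x => by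
  rw [← mul_assoc, QP0 ε l hε, zero_mul]

lemma trace_Pplus : (Pplus ε l).trace = 1 := by
  rw [Pplus, hBCS_eq]
  simp [Matrix.trace_fin_two, Matrix.one_apply]

lemma trace_Pminus : (Pminus ε l).trace = 1 := by
  rw [Pminus, hBCS_eq]
  simp [Matrix.trace_fin_two, Matrix.one_apply]

lemma Pplus_entries (hε : 0 < ε) : Pplus ε l =
    !![((μBCS ε l : ℂ) + ε)/(2*(μBCS ε l : ℂ)), -l/(2*(μBCS ε l : ℂ));
       -(starRingEnd ℂ l)/(2*(μBCS ε l : ℂ)), ((μBCS ε l : ℂ) - ε)/(2*(μBCS ε l : ℂ))] := by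
  have hm : ((μBCS ε l : ℂ)) ≠ 0 := by exact_mod_cast (mu_pos ε l hε).ne'
  rw [Pplus, hBCS_eq]
  ext i j
  fin_cases i <;> fin_cases j <;>
    (simp [Matrix.one_apply]; field_simp; try ring)

lemma Pminus_entries (hε : 0 < ε) : Pminus ε l =
    !![((μBCS ε l : ℂ) - ε)/(2*(μBCS ε l : ℂ)), l/(2*(μBCS ε l : ℂ));
       (starRingEnd ℂ l)/(2*(μBCS ε l : ℂ)), ((μBCS ε l : ℂ) + ε)/(2*(μBCS ε l : ℂ))] := by
  have hm : ((μBCS ε l : ℂ)) ≠ 0 := by exact_mod_cast (mu_pos ε l hε).ne'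
  rw [Pminus, hBCS_eq]
  ext i j
  fin_cases i <;> fin_cases j <;>
    (simp [Matrix.one_apply]; field_simp; try ring)

lemma traceQRQ (hε : 0 < ε) :
    (Pplus ε l * (σz * (Pminus ε l * (σz * Pplus ε l)))).trace
      = l * starRingEnd ℂ l / (μBCS ε l : ℂ) ^ 2 := by
  have hm : ((μBCS ε l : ℂ)) ≠ 0 := by exact_mod_cast (mu_pos ε l hε).ne'
  rw [Matrix.trace_mul_comm]
  simp only [← mul_assoc]
  rw [mul_assoc _ (Pplus ε l) (Pplus ε l), Pplus_idem ε l hε]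
  have h2 := mu_sq ε l hε
  rw [Pplus_entries ε l hε, Pminus_entries ε l hε, σz]
  simp [Matrix.trace_fin_two, Matrix.mul_apply, Fin.sum_univ_two]
  field_simp
  linear_combination 2 * h2

lemma traceRQR (hε : 0 < ε) :
    (Pminus ε l * (σz * (Pplus ε l * (σz * Pminus ε l)))).trace
      = l * starRingEnd ℂ l / (μBCS ε l : ℂ) ^ 2 := by
  have hm : ((μBCS ε l : ℂ)) ≠ 0 := by exact_mod_cast (mu_pos ε l hε).ne'
  rw [Matrix.trace_mul_comm]
  simp only [← mul_assoc]
  rw [mul_assoc _ (Pminus ε l) (Pminus ε l), Pminus_idem ε l hε]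
  have h2 := mu_sq ε l hε
  rw [Pplus_entries ε l hε, Pminus_entries ε l hε, σz]
  simp [Matrix.trace_fin_two, Matrix.mul_apply, Fin.sum_univ_two]
  field_simp
  linear_combination 2 * h2

lemma integrand_eq (hε : 0 < ε) (β u : ℝ) :
    Matrix.trace (ρBCS ε β l * σhat ε l * mexp ((-(u : ℂ)) • hBCS ε l) * σhat ε l *
      mexp ((u : ℂ) • hBCS ε l)) =
    ((Complex.exp ((β:ℂ) * (μBCS ε l : ℂ)))⁻¹ + Complex.exp ((β:ℂ) * (μBCS ε l : ℂ)))⁻¹ *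
      (l * starRingEnd ℂ l / (μBCS ε l : ℂ) ^ 2) *
      ((Complex.exp ((β:ℂ) * (μBCS ε l : ℂ)))⁻¹ * Complex.exp ((u:ℂ) * (μBCS ε l : ℂ)) ^ 2 +
       Complex.exp ((β:ℂ) * (μBCS ε l : ℂ)) * (Complex.exp ((u:ℂ) * (μBCS ε l : ℂ)))⁻¹ ^ 2) := by
  rw [ρBCS, σhat, Eplus, Eminus,
    mexp_smul_hBCS ε l hε (-(β:ℂ)), mexp_smul_hBCS ε l hε (-(u:ℂ)), mexp_smul_hBCS ε l hε (u:ℂ)]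
  simp only [add_mul, mul_add, smul_mul_assoc, mul_smul_comm, smul_smul, trace_add, trace_smul,
    mul_assoc, smul_add, trace_zero, mul_zero, zero_mul, smul_zero, add_zero, zero_add,
    QQ' ε l hε, RR' ε l hε, QR' ε l hε, RQ' ε l hε, PQ0 ε l hε, QP0 ε l hε,
    Pplus_idem ε l hε, Pminus_idem ε l hε]
  rw [traceQRQ ε l hε, traceRQR ε l hε, trace_Pplus, trace_Pminus]
  simp only [smul_eq_mul, mul_one, neg_neg, neg_mul, Complex.exp_neg]
  ring

end Aux

/-- the Duhamel (canonical) correlation of the reduced symmetry generator: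
∫₀^β Tr(ρ_λ·σ̂^z·exp(−uh_λ)·σ̂^z·exp(uh_λ)) du = (|λ|²/μ³)·tanh(βμ); if λ ≠ 0 satisfies
the gap equation tanh(βμ) = 2μ, this quantization parameter equals 2|λ|²/μ². -/
theorem bcs_duhamel_correlation
    (ε β : ℝ) (hε : ε ∈ Set.Ioo (0 : ℝ) (1 / 2)) (hβ : 0 < β) (l : ℂ) :
    (∫ u in (0 : ℝ)..β,
        Matrix.trace (ρBCS ε β l * σhat ε l * mexp ((-(u : ℂ)) • hBCS ε l) * σhat ε l *
          mexp ((u : ℂ) • hBCS ε l))) =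
      ((‖l‖ ^ 2 / μBCS ε l ^ 3 * Real.tanh (β * μBCS ε l) : ℝ) : ℂ) ∧
    (l ≠ 0 → Real.tanh (β * μBCS ε l) = 2 * μBCS ε l →
      (∫ u in (0 : ℝ)..β,
          Matrix.trace (ρBCS ε β l * σhat ε l * mexp ((-(u : ℂ)) • hBCS ε l) * σhat ε l *
            mexp ((u : ℂ) • hBCS ε l))) =
        ((2 * ‖l‖ ^ 2 / μBCS ε l ^ 2 : ℝ) : ℂ)) := by
  have hε0 : 0 < ε := hε.1
  have hμ : 0 < μBCS ε l := mu_pos ε l hε0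
  have hμc : ((μBCS ε l : ℂ)) ≠ 0 := by exact_mod_cast hμ.ne'
  set m : ℂ := (μBCS ε l : ℂ) with hm
  set Y : ℂ := Complex.exp ((β:ℂ) * m) with hYdef
  have hYreal : Y = ((Real.exp (β * μBCS ε l) : ℝ) : ℂ) := by
    rw [hYdef, Complex.ofReal_exp]; push_cast; ring_nf; rfl
  have hY : Y ≠ 0 := Complex.exp_ne_zero _
  have hE : (0:ℝ) < Real.exp (β * μBCS ε l) := Real.exp_pos _
  have hZ : Y⁻¹ + Y ≠ 0 := by
    rw [hYreal]
    rw [← Complex.ofReal_inv, ← Complex.ofReal_add]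
    exact_mod_cast (by positivity : (0:ℝ) < (Real.exp (β * μBCS ε l))⁻¹
      + Real.exp (β * μBCS ε l)).ne'
  have hlc : l * starRingEnd ℂ l = ((‖l‖ ^ 2 : ℝ) : ℂ) := by
    rw [Complex.mul_conj, Complex.normSq_eq_norm_sq]
  set k : ℂ := l * starRingEnd ℂ l / m ^ 2 with hk
  set c1 : ℂ := (Y⁻¹ + Y)⁻¹ * k * Y⁻¹ with hc1
  set c2 : ℂ := (Y⁻¹ + Y)⁻¹ * k * Y with hc2
  have key : ∀ u : ℝ,
      Matrix.trace (ρBCS ε β l * σhat ε l * mexp ((-(u : ℂ)) • hBCS ε l) * σhat ε l *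
        mexp ((u : ℂ) • hBCS ε l))
      = c1 * Complex.exp ((2 * m) * u) + c2 * Complex.exp ((-(2 * m)) * u) := by
    intro u
    rw [integrand_eq ε l hε0 β u]
    have h1 : Complex.exp ((2 * m) * u) = Complex.exp ((u:ℂ) * m) ^ 2 := by
      rw [← Complex.exp_nat_mul]; ring_nf
    have h2 : Complex.exp ((-(2 * m)) * u) = (Complex.exp ((u:ℂ) * m))⁻¹ ^ 2 := by
      rw [← Complex.exp_neg, ← Complex.exp_nat_mul]; ring_nf
    rw [h1, h2, hc1, hc2]
    ring
  have hInt : (∫ u in (0 : ℝ)..β,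
      Matrix.trace (ρBCS ε β l * σhat ε l * mexp ((-(u : ℂ)) • hBCS ε l) * σhat ε l *
        mexp ((u : ℂ) • hBCS ε l)))
      = ∫ u in (0 : ℝ)..β, (c1 * Complex.exp ((2 * m) * u) + c2 * Complex.exp ((-(2 * m)) * u)) :=
    intervalIntegral.integral_congr (fun u _ => key u)
  have hc2m : (2 * m) ≠ 0 := by simp [hμc]
  have hcn2m : (-(2 * m)) ≠ 0 := by simp [hμc]
  have hcont1 : Continuous fun u : ℝ => c1 * Complex.exp ((2 * m) * u) :=
    continuous_const.mul (Complex.continuous_exp.comp (continuous_const.mul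
      Complex.continuous_ofReal))
  have hcont2 : Continuous fun u : ℝ => c2 * Complex.exp ((-(2 * m)) * u) :=
    continuous_const.mul (Complex.continuous_exp.comp (continuous_const.mul
      Complex.continuous_ofReal))
  have hval : (∫ u in (0 : ℝ)..β,
      (c1 * Complex.exp ((2 * m) * u) + c2 * Complex.exp ((-(2 * m)) * u)))
      = c1 * ((Complex.exp ((2*m) * β) - 1) / (2*m))
        + c2 * ((Complex.exp ((-(2*m)) * β) - 1) / (-(2*m))) := by
    rw [intervalIntegral.integral_add (hcont1.intervalIntegrable _ _)
      (hcont2.intervalIntegrable _ _),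
      intervalIntegral.integral_const_mul, intervalIntegral.integral_const_mul,
      integral_exp_mul_complex hc2m, integral_exp_mul_complex hcn2m]
    norm_num
  have hY2 : Complex.exp ((2*m) * (β:ℂ)) = Y ^ 2 := by
    rw [hYdef, ← Complex.exp_nat_mul]; ring_nf
  have hY2' : Complex.exp ((-(2*m)) * (β:ℂ)) = (Y ^ 2)⁻¹ := by
    rw [show (-(2*m)) * (β:ℂ) = -((2*m) * (β:ℂ)) by ring, Complex.exp_neg, hY2]
  have main : (∫ u in (0 : ℝ)..β,
      Matrix.trace (ρBCS ε β l * σhat ε l * mexp ((-(u : ℂ)) • hBCS ε l) * σhat ε l *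
        mexp ((u : ℂ) • hBCS ε l)))
      = ((‖l‖ ^ 2 / μBCS ε l ^ 3 * Real.tanh (β * μBCS ε l) : ℝ) : ℂ) := by
    have hEc : ((Real.exp (β * μBCS ε l) : ℝ) : ℂ) ≠ 0 := by exact_mod_cast hE.ne'
    have core : Y⁻¹ * ((Y^2 - 1)/(2*m)) + Y * (((Y^2)⁻¹ - 1)/(-(2*m))) = (Y - Y⁻¹)/m := by
      field_simp
      ring
    have stepA : c1 * ((Y^2 - 1)/(2*m)) + c2 * (((Y^2)⁻¹ - 1)/(-(2*m)))
        = k * ((Y - Y⁻¹)/(Y⁻¹ + Y)) / m := by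
      calc c1 * ((Y^2 - 1)/(2*m)) + c2 * (((Y^2)⁻¹ - 1)/(-(2*m)))
          = (Y⁻¹ + Y)⁻¹ * k * (Y⁻¹ * ((Y^2 - 1)/(2*m)) + Y * (((Y^2)⁻¹ - 1)/(-(2*m)))) := by
            rw [hc1, hc2]; ring
        _ = (Y⁻¹ + Y)⁻¹ * k * ((Y - Y⁻¹)/m) := by rw [core]
        _ = k * ((Y - Y⁻¹)/(Y⁻¹ + Y)) / m := by ring
    have stepB : k * ((Y - Y⁻¹)/(Y⁻¹ + Y)) / m
        = ((‖l‖ ^ 2 / μBCS ε l ^ 3 * Real.tanh (β * μBCS ε l) : ℝ) : ℂ) := by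
      rw [hk, hlc, hYreal, hm, Real.tanh_eq_sinh_div_cosh, Real.sinh_eq, Real.cosh_eq,
        Real.exp_neg]
      rw [hYreal] at hZ
      push_cast
      field_simp
      ring
    rw [hInt, hval, hY2, hY2', stepA, stepB]
  refine ⟨main, fun hl hgap => ?_⟩
  rw [main, hgap]
  congr 1
  have hμne : μBCS ε l ≠ 0 := hμ.ne'
  field_simp
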